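/- (Core of Theorem 4.3, part 2) For every integer k ≥ 2 there exist two port-numbered graphs G and G', both on n = 5·2^k − 4 vertices, such that: all vertices of G are 3-regular and have identical views (so G has two distinct vertices with equal views); G' has exactly one vertex of degree 1 (hence a vertex with a unique view, and all views of G' are pairwise distinct); and G' contains a vertex w whose view truncated at depth 2^k − 1 equals the common view truncated at depth 2^k − 1 of the vertices of G. -/

import Mathlib

/-- A port-numbered graph on vertex type `V`: a finite connected simple graph in which,
at every vertex `v` of degree `deg v`, the incident edges are labeled by distinct port
numbers `0, …, deg v - 1`.  `next v i = some (u, j)` means that the edge with port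
number `i` at `v` leads to the vertex `u`, at which it has port number `j`. -/
structure PortGraph (V : Type*) [Fintype V] where
  /-- the degree of each vertex -/
  deg : V → ℕ
  /-- `next v i = some (u, j)` iff the edge with port `i` at `v` has `u` as its other
  endpoint, where it carries port number `j` -/
  next : V → ℕ → Option (V × ℕ)
  /-- exactly the ports `0, …, deg v - 1` are present at `v` -/
  next_isSome : ∀ v i, (next v i).isSome ↔ i < deg v
  /-- the port labeling is consistent at the two endpoints of every edge -/
  next_symm : ∀ v i u j, next v i = some (u, j) → next u j = some (v, i)
  /-- no self-loops -/
  next_ne : ∀ v i u j, next v i = some (u, j) → u ≠ v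
  /-- no multiple edges: distinct ports at `v` lead to distinct neighbors -/
  next_inj : ∀ v i i' u j j', next v i = some (u, j) → next v i' = some (u, j') → i = i'
  /-- the graph is connected -/
  connected : ∀ u v : V, Relation.ReflTransGen (fun a b => ∃ i j, next a i = some (b, j)) u v

namespace PortGraph

variable {V : Type*} [Fintype V]

/-- `P.viewEq t u v` means that the views of `u` and `v` truncated at depth `t` are equal:
`V^t(u) = V^t(v)`. -/
def viewEq (P : PortGraph V) : ℕ → V → V → Prop
  | 0, u, v => P.deg u = P.deg v
  | t + 1, u, v =>
      P.deg u = P.deg v ∧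
        ∀ (i j j' : ℕ) (u' v' : V),
          P.next u i = some (u', j) → P.next v i = some (v', j') →
          j = j' ∧ viewEq P t u' v'

/-- `P.ViewEq u v` means that the (infinite) views of `u` and `v` are equal:
`V(u) = V(v)`, i.e. `V^t(u) = V^t(v)` for every `t`. -/
def ViewEq (P : PortGraph V) (u v : V) : Prop := ∀ t, P.viewEq t u v

end PortGraph

namespace PortGraph

/-- Equality of truncated views of vertices of two (possibly different) port-numbered
graphs: `viewEq2 P Q t u v` means `V^t(u) = V^t(v)`, where the view of `u` is taken in `P`
and the view of `v` is taken in `Q`. -/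
def viewEq2 {V W : Type*} [Fintype V] [Fintype W] (P : PortGraph V) (Q : PortGraph W) :
    ℕ → V → W → Prop
  | 0, u, v => P.deg u = Q.deg v
  | t + 1, u, v =>
      P.deg u = Q.deg v ∧
        ∀ (i j j' : ℕ) (u' : V) (v' : W),
          P.next u i = some (u', j) → Q.next v i = some (v', j') →
          j = j' ∧ viewEq2 P Q t u' v'

/-- Equality of the (infinite) views of a vertex of `P` and a vertex of `Q`. -/
def ViewEq2 {V W : Type*} [Fintype V] [Fintype W] (P : PortGraph V) (Q : PortGraph W)
    (u : V) (v : W) : Prop := ∀ t, viewEq2 P Q t u v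

end PortGraph

namespace PortGraph

variable {V W X : Type*} [Fintype V] [Fintype W] [Fintype X]

lemma viewEq2_zero (P : PortGraph V) (Q : PortGraph W) (u : V) (v : W) :
    viewEq2 P Q 0 u v ↔ P.deg u = Q.deg v := Iff.rfl

lemma viewEq2_succ (P : PortGraph V) (Q : PortGraph W) (t : ℕ) (u : V) (v : W) :
    viewEq2 P Q (t+1) u v ↔ (P.deg u = Q.deg v ∧
        ∀ (i j j' : ℕ) (u' : V) (v' : W),
          P.next u i = some (u', j) → Q.next v i = some (v', j') →
          j = j' ∧ viewEq2 P Q t u' v') := Iff.rfl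

def map (e : V ≃ W) (P : PortGraph V) : PortGraph W where
  deg w := P.deg (e.symm w)
  next w i := (P.next (e.symm w) i).map (fun q => (e q.1, q.2))
  next_isSome v i := by
    rw [← P.next_isSome (e.symm v) i]
    rcases h : P.next (e.symm v) i with _ | x <;> simp [h]
  next_symm v i u j h := by
    rw [Option.map_eq_some_iff] at h
    obtain ⟨⟨a, b⟩, ha, hfb⟩ := h
    obtain ⟨rfl, rfl⟩ : e a = u ∧ b = j := by simpa using hfb
    have := P.next_symm _ _ _ _ ha
    simp only [Equiv.symm_apply_apply, Option.map_eq_some_iff]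
    exact ⟨(e.symm v, i), this, by simp⟩
  next_ne v i u j h := by
    rw [Option.map_eq_some_iff] at h
    obtain ⟨⟨a, b⟩, ha, hfb⟩ := h
    obtain ⟨rfl, rfl⟩ : e a = u ∧ b = j := by simpa using hfb
    have := P.next_ne _ _ _ _ ha
    intro hh; exact this (by rw [← hh]; simp)
  next_inj v i i' u j j' h h' := by
    rw [Option.map_eq_some_iff] at h h'
    obtain ⟨⟨a, b⟩, ha, hfb⟩ := h
    obtain ⟨⟨a', b'⟩, ha', hfb'⟩ := h'
    obtain ⟨he, rfl⟩ : e a = u ∧ b = j := by simpa using hfb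
    obtain ⟨he', rfl⟩ : e a' = u ∧ b' = j' := by simpa using hfb'
    have : a = a' := e.injective (he.trans he'.symm)
    subst this
    exact P.next_inj _ _ _ _ _ _ ha ha'
  connected u v := by
    have h2 := Relation.ReflTransGen.lift
      (p := fun a b => ∃ i j, (P.next (e.symm a) i).map (fun q => (e q.1, q.2)) = some (b, j)) e
      (fun a b hab => by
        obtain ⟨i, j, hab⟩ := hab
        exact ⟨i, j, by simp only [Equiv.symm_apply_apply]; rw [hab]; rfl⟩)
      _ _ (P.connected (e.symm u) (e.symm v))
    simpa [Function.onFun] using h2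

@[simp] lemma map_deg (e : V ≃ W) (P : PortGraph V) (w : W) :
    (P.map e).deg w = P.deg (e.symm w) := rfl

lemma map_next_eq_some (e : V ≃ W) (P : PortGraph V) (v : V) (i j : ℕ) (u : V) :
    (P.map e).next (e v) i = some (e u, j) ↔ P.next v i = some (u, j) := by
  show (P.next (e.symm (e v)) i).map _ = _ ↔ _
  rw [Equiv.symm_apply_apply, Option.map_eq_some_iff]
  constructor
  · rintro ⟨⟨a, b⟩, ha, hfb⟩
    obtain ⟨h1, rfl⟩ : e a = e u ∧ b = j := by simpa using hfb
    rwa [e.injective h1] at ha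
  · intro h; exact ⟨(u, j), h, rfl⟩

lemma viewEq2_map_right (e : W ≃ X) (P : PortGraph V) (Q : PortGraph W) :
    ∀ t u v, viewEq2 P (Q.map e) t u (e v) ↔ viewEq2 P Q t u v := by
  intro t
  induction t with
  | zero => intro u v; simp [viewEq2_zero]
  | succ t ih =>
    intro u v
    rw [viewEq2_succ, viewEq2_succ]
    constructor
    · rintro ⟨hd, h⟩
      refine ⟨by simpa using hd, ?_⟩
      intro i j j' u' v' h1 h2
      have h2' : (Q.map e).next (e v) i = some (e v', j') := by
        rw [map_next_eq_some]; exact h2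
      obtain ⟨hj, hv⟩ := h i j j' u' (e v') h1 h2'
      exact ⟨hj, (ih u' v').1 hv⟩
    · rintro ⟨hd, h⟩
      refine ⟨by simpa using hd, ?_⟩
      intro i j j' u' v' h1 h2
      rw [show (Q.map e).next (e v) i = (Q.next v i).map (fun q => (e q.1, q.2)) by
        show (Q.next (e.symm (e v)) i).map _ = _; rw [Equiv.symm_apply_apply]] at h2
      rw [Option.map_eq_some_iff] at h2
      obtain ⟨⟨a, b⟩, ha, hfb⟩ := h2
      obtain ⟨rfl, rfl⟩ : e a = v' ∧ b = j' := by simpa using hfb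
      obtain ⟨hj, hv⟩ := h i j b u' a h1 ha
      exact ⟨hj, (ih u' a).2 hv⟩

lemma viewEq2_map_left (e : V ≃ X) (P : PortGraph V) (Q : PortGraph W) :
    ∀ t u v, viewEq2 (P.map e) Q t (e u) v ↔ viewEq2 P Q t u v := by
  intro t
  induction t with
  | zero => intro u v; simp [viewEq2_zero]
  | succ t ih =>
    intro u v
    rw [viewEq2_succ, viewEq2_succ]
    constructor
    · rintro ⟨hd, h⟩
      refine ⟨by simpa using hd, ?_⟩
      intro i j j' u' v' h1 h2
      have h1' : (P.map e).next (e u) i = some (e u', j) := by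
        rw [map_next_eq_some]; exact h1
      obtain ⟨hj, hv⟩ := h i j j' (e u') v' h1' h2
      exact ⟨hj, (ih u' v').1 hv⟩
    · rintro ⟨hd, h⟩
      refine ⟨by simpa using hd, ?_⟩
      intro i j j' u' v' h1 h2
      rw [show (P.map e).next (e u) i = (P.next u i).map (fun q => (e q.1, q.2)) by
        show (P.next (e.symm (e u)) i).map _ = _; rw [Equiv.symm_apply_apply]] at h1
      rw [Option.map_eq_some_iff] at h1
      obtain ⟨⟨a, b⟩, ha, hfb⟩ := h1
      obtain ⟨rfl, rfl⟩ : e a = u' ∧ b = j := by simpa using hfb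
      obtain ⟨hj, hv⟩ := h i b j' a v' ha h2
      exact ⟨hj, (ih a v').2 hv⟩

lemma viewEq2_trans {P : PortGraph V} {Q : PortGraph W} {R : PortGraph X} :
    ∀ t (u : V) (v : W) (w : X), viewEq2 P Q t u v → viewEq2 Q R t v w → viewEq2 P R t u w := by
  intro t
  induction t with
  | zero => intro u v w h1 h2; exact h1.trans h2
  | succ t ih =>
    intro u v w h1 h2
    obtain ⟨hd1, h1⟩ := h1
    obtain ⟨hd2, h2⟩ := h2
    refine ⟨hd1.trans hd2, ?_⟩
    intro i j j' u' w' hu hw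
    have hi : i < P.deg u := (P.next_isSome u i).1 (by rw [hu]; rfl)
    have : (Q.next v i).isSome := (Q.next_isSome v i).2 (by omega)
    obtain ⟨⟨v', jv⟩, hv⟩ := Option.isSome_iff_exists.1 this
    obtain ⟨hj1, hvv1⟩ := h1 i j jv u' v' hu hv
    obtain ⟨hj2, hvv2⟩ := h2 i jv j' v' w' hv hw
    exact ⟨hj1.trans hj2, ih u' v' w' hvv1 hvv2⟩

lemma trace {P : PortGraph V} {u v u' : V} {i j : ℕ} (H : ViewEq2 P P u v)
    (h : P.next u i = some (u', j)) :
    ∃ v', P.next v i = some (v', j) ∧ ViewEq2 P P u' v' := by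
  have hi : i < P.deg u := (P.next_isSome u i).1 (by rw [h]; rfl)
  have hd : P.deg u = P.deg v := H 0
  have : (P.next v i).isSome := (P.next_isSome v i).2 (by omega)
  obtain ⟨⟨v', j'⟩, hv⟩ := Option.isSome_iff_exists.1 this
  have hj : j = j' := ((H 1).2 i j j' u' v' h hv).1
  subst hj
  exact ⟨v', hv, fun t => ((H (t+1)).2 i j j u' v' h hv).2⟩

lemma eq_of_viewEq2_self {P : PortGraph V} {z : V} (hz1 : P.deg z = 1)
    (hz : ∀ v, P.deg v = 1 → v = z) (u v : V) (H : ViewEq2 P P u v) : u = v := by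
  have walk : ∀ a, Relation.ReflTransGen (fun a b => ∃ i j, P.next a i = some (b, j)) u a →
      ∃ b, ViewEq2 P P a b ∧ (a = b → u = v) := by
    intro a h
    induction h with
    | refl => exact ⟨v, H, fun h => h⟩
    | tail _ hstep ih =>
      obtain ⟨b, Hab, himp⟩ := ih
      obtain ⟨i, j, hstep⟩ := hstep
      obtain ⟨b', hb', H'⟩ := trace Hab hstep
      refine ⟨b', H', fun hcb => himp ?_⟩
      subst hcb
      have h1 := P.next_symm _ _ _ _ hstep
      have h2 := P.next_symm _ _ _ _ hb'
      rw [h1] at h2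
      have : (_, _) = ((_ : V), _) := Option.some.inj h2
      exact congrArg Prod.fst this
  obtain ⟨b, Hzb, himp⟩ := walk z (P.connected u z)
  have hdb : P.deg z = P.deg b := Hzb 0
  exact himp (hz b (by omega)).symm

end PortGraph

section Cycle

variable (n h' : ℕ) [NeZero n] (hh : 2 * h' = n) (hh2 : 2 ≤ h')

def Graw : PortGraph (ZMod n) where
  deg _ := 3
  next v p := if p = 0 then some (v + 1, 1) else if p = 1 then some (v - 1, 0)
    else if p = 2 then some (v + (h' : ZMod n), 2) else none
  next_isSome v p := by split_ifs <;> simp <;> omega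
  next_symm v p u j h := by
    have hzero : (h' : ZMod n) + (h' : ZMod n) = 0 := by
      rw [← Nat.cast_add, show h' + h' = n by omega, ZMod.natCast_self]
    split_ifs at h with c0 c1 c2 <;>
      simp only [Option.some.injEq, Prod.mk.injEq] at h <;>
      obtain ⟨rfl, rfl⟩ := h
    · subst c0; simp
    · subst c1; simp
    · subst c2; simp [add_assoc, hzero]
  next_ne v p u j h := by
    haveI : Fact (1 < n) := ⟨by omega⟩
    split_ifs at h with c0 c1 c2 <;>
      simp only [Option.some.injEq, Prod.mk.injEq] at h <;>
      obtain ⟨rfl, rfl⟩ := h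
    · simp
    · simp
    · simp only [ne_eq, add_eq_left]
      intro hc
      rw [ZMod.natCast_eq_zero_iff] at hc
      have := Nat.le_of_dvd (by omega) hc
      omega
  next_inj v p p' u j j' h1 h2 := by
    haveI : Fact (1 < n) := ⟨by omega⟩
    have c2 : (2 : ZMod n) ≠ 0 := by
      intro hc
      have h20 : ((2 : ℕ) : ZMod n) = 0 := by push_cast; exact hc
      rw [ZMod.natCast_eq_zero_iff] at h20
      have := Nat.le_of_dvd (by omega) h20; omega
    have ch1 : (h' : ZMod n) ≠ 1 := by
      intro hc
      have : ((h' : ℕ) : ZMod n).val = ((1 : ℕ) : ZMod n).val := by rw [hc]; push_cast; rfl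
      rw [ZMod.val_cast_of_lt (by omega), ZMod.val_cast_of_lt (by omega)] at this
      omega
    have ch2 : (h' : ZMod n) + 1 ≠ 0 := by
      intro hc
      have : ((h' + 1 : ℕ) : ZMod n) = 0 := by push_cast; exact hc
      rw [ZMod.natCast_eq_zero_iff] at this
      have := Nat.le_of_dvd (by omega) this
      omega
    split_ifs at h1 h2 <;>
      first
        | omega
        | exact Option.noConfusion h1
        | exact Option.noConfusion h2
        | (simp only [Option.some.injEq, Prod.mk.injEq] at h1 h2
           first
            | exact absurd (show (2 : ZMod n) = 0 by linear_combination h1.1 - h2.1) c2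
            | exact absurd (show (2 : ZMod n) = 0 by linear_combination h2.1 - h1.1) c2
            | exact absurd (show (h' : ZMod n) = 1 by linear_combination h1.1 - h2.1) ch1
            | exact absurd (show (h' : ZMod n) = 1 by linear_combination h2.1 - h1.1) ch1
            | exact absurd (show (h' : ZMod n) + 1 = 0 by linear_combination h1.1 - h2.1) ch2
            | exact absurd (show (h' : ZMod n) + 1 = 0 by linear_combination h2.1 - h1.1) ch2)
  connected u v := by
    have chain : ∀ (m : ℕ) (u : ZMod n), Relation.ReflTransGen
        (fun a b => ∃ i j, (if i = 0 then some (a + 1, 1) else if i = 1 then some (a - 1, 0)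
          else if i = 2 then some (a + (h' : ZMod n), 2) else none) = some (b, j)) u (u + m) := by
      intro m
      induction m with
      | zero => intro u; simpa using Relation.ReflTransGen.refl
      | succ m ih =>
        intro u
        refine (ih u).tail ⟨0, 1, ?_⟩
        rw [if_pos rfl]
        exact congrArg _ (Prod.ext (by push_cast; ring) rfl)
    have := chain (v - u).val u
    rwa [ZMod.natCast_zmod_val, add_sub_cancel] at this

lemma Graw_deg (v : ZMod n) : (Graw n h' hh hh2).deg v = 3 := rfl

lemma Graw_next0 (v : ZMod n) : (Graw n h' hh hh2).next v 0 = some (v + 1, 1) := rfl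

lemma Graw_next1 (v : ZMod n) : (Graw n h' hh hh2).next v 1 = some (v - 1, 0) := rfl

lemma Graw_next2 (v : ZMod n) :
    (Graw n h' hh hh2).next v 2 = some (v + (h' : ZMod n), 2) := rfl

lemma Graw_hom : ∀ t (u v : ZMod n),
    PortGraph.viewEq2 (Graw n h' hh hh2) (Graw n h' hh hh2) t u v := by
  intro t
  induction t with
  | zero => intro u v; exact rfl
  | succ t ih =>
    intro u v
    refine ⟨rfl, ?_⟩
    intro i j j' u' v' h1 h2
    simp only [Graw] at h1 h2
    split_ifs at h1 h2 <;>
      simp only [Option.some.injEq, Prod.mk.injEq] at h1 h2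
    · obtain ⟨rfl, rfl⟩ := h1; obtain ⟨rfl, rfl⟩ := h2; exact ⟨rfl, ih _ _⟩
    · obtain ⟨rfl, rfl⟩ := h1; obtain ⟨rfl, rfl⟩ := h2; exact ⟨rfl, ih _ _⟩
    · obtain ⟨rfl, rfl⟩ := h1; obtain ⟨rfl, rfl⟩ := h2; exact ⟨rfl, ih _ _⟩

end Cycle

section Ladder

def nx (T v p : ℕ) : Option (ℕ × ℕ) :=
  if v < 3*T then
    if p = 0 then (if v = 3*T-1 then some (5*T, 0) else some (v+1, 1))
    else if p = 1 then (if v = 0 then none else some (v-1, 0))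
    else if p = 2 then
      (if T-2 ≤ v ∧ v ≤ 3*T-2 then some (3*T + (v - (T-2)), if v = T-2 then 1 else 2) else none)
    else none
  else
    if p = 0 then (if v = 5*T then some (3*T-1, 0) else some (v+1, 1))
    else if p = 1 then (if v = 3*T then some (T-2, 2) else some (v-1, 0))
    else if p = 2 then (if 3*T+1 ≤ v then some (v - 3*T + (T-2), 2) else none)
    else none

def dg (T v : ℕ) : ℕ :=
  if v = 0 then 1 else if v < T-2 then 2
  else if v < 3*T then (if v = 3*T-1 then 2 else 3)
  else if v = 3*T then 2 else 3

variable {T : ℕ}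

lemma nx_isSome (hT : 3 ≤ T) (v p : ℕ) (hv : v ≤ 5*T) :
    (nx T v p).isSome ↔ p < dg T v := by
  unfold nx dg; split_ifs <;> simp <;> omega

lemma nx_lt (hT : 3 ≤ T) {v p u j : ℕ} (hv : v ≤ 5*T) (h : nx T v p = some (u, j)) :
    u < 5*T+1 := by
  unfold nx at h; split_ifs at h <;> simp at h <;> omega

lemma nx_ne (hT : 3 ≤ T) {v p u j : ℕ} (hv : v ≤ 5*T) (h : nx T v p = some (u, j)) :
    u ≠ v := by
  unfold nx at h; split_ifs at h <;> simp at h <;> omega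

lemma nx_inj (hT : 3 ≤ T) {v p p' u j j' : ℕ} (hv : v ≤ 5*T)
    (h1 : nx T v p = some (u, j)) (h2 : nx T v p' = some (u, j')) : p = p' := by
  unfold nx at h1 h2; split_ifs at h1 h2 <;> simp at h1 h2 <;> omega

lemma nxA0 {v : ℕ} (h1 : v+1 < 3*T) : nx T v 0 = some (v+1, 1) := by
  unfold nx; split_ifs <;> first | rfl | contradiction | omega | (exfalso; omega) | (simp only [Option.some.injEq, Prod.mk.injEq, and_true, true_and]; first | omega | (constructor <;> omega))

lemma nxA0e (hT : 1 ≤ T) : nx T (3*T-1) 0 = some (5*T, 0) := by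
  unfold nx; split_ifs <;> first | rfl | contradiction | omega | (exfalso; omega) | (simp only [Option.some.injEq, Prod.mk.injEq, and_true, true_and]; first | omega | (constructor <;> omega))

lemma nxA1 {v : ℕ} (h0 : 0 < v) (h : v < 3*T) : nx T v 1 = some (v-1, 0) := by
  unfold nx; split_ifs <;> first | rfl | contradiction | omega | (exfalso; omega) | (simp only [Option.some.injEq, Prod.mk.injEq, and_true, true_and]; first | omega | (constructor <;> omega))

lemma nxA2 (hT : 3 ≤ T) {v : ℕ} (h1 : T-2 < v) (h2 : v ≤ 3*T-2) :
    nx T v 2 = some (3*T + (v - (T-2)), 2) := by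
  unfold nx; split_ifs <;> first | rfl | contradiction | omega | (exfalso; omega) | (simp only [Option.some.injEq, Prod.mk.injEq, and_true, true_and]; first | omega | (constructor <;> omega))

lemma nxA2e (hT : 3 ≤ T) : nx T (T-2) 2 = some (3*T, 1) := by
  unfold nx; split_ifs <;> first | rfl | contradiction | omega | (exfalso; omega) | (simp only [Option.some.injEq, Prod.mk.injEq, and_true, true_and]; first | omega | (constructor <;> omega))

lemma nxB0 {v : ℕ} (h1 : 3*T ≤ v) (h2 : v < 5*T) : nx T v 0 = some (v+1, 1) := by
  unfold nx; split_ifs <;> first | rfl | contradiction | omega | (exfalso; omega) | (simp only [Option.some.injEq, Prod.mk.injEq, and_true, true_and]; first | omega | (constructor <;> omega))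

lemma nxB0e (hT : 1 ≤ T) : nx T (5*T) 0 = some (3*T-1, 0) := by
  unfold nx; split_ifs <;> first | rfl | contradiction | omega | (exfalso; omega) | (simp only [Option.some.injEq, Prod.mk.injEq, and_true, true_and]; first | omega | (constructor <;> omega))

lemma nxB1 {v : ℕ} (h : 3*T < v) : nx T v 1 = some (v-1, 0) := by
  unfold nx; split_ifs <;> first | rfl | contradiction | omega | (exfalso; omega) | (simp only [Option.some.injEq, Prod.mk.injEq, and_true, true_and]; first | omega | (constructor <;> omega))

lemma nxB1e (hT : 1 ≤ T) : nx T (3*T) 1 = some (T-2, 2) := by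
  unfold nx; split_ifs <;> first | rfl | contradiction | omega | (exfalso; omega) | (simp only [Option.some.injEq, Prod.mk.injEq, and_true, true_and]; first | omega | (constructor <;> omega))

lemma nxB2 (hT : 1 ≤ T) {v : ℕ} (h : 3*T+1 ≤ v) : nx T v 2 = some (v - 3*T + (T-2), 2) := by
  unfold nx; split_ifs <;> first | rfl | contradiction | omega | (exfalso; omega) | (simp only [Option.some.injEq, Prod.mk.injEq, and_true, true_and]; first | omega | (constructor <;> omega))

lemma dg_key (hT : 3 ≤ T) {v p : ℕ} (hpd : p < dg T v) :
    (v = 0 → p < 1) ∧ (v < T-2 → p < 2) ∧ (v = 3*T-1 → p < 2) ∧ (v = 3*T → p < 2) ∧ p < 3 := by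
  unfold dg at hpd; split_ifs at hpd <;> omega

lemma nx_symm (hT : 3 ≤ T) {v p u j : ℕ} (hv : v ≤ 5*T) (h : nx T v p = some (u, j)) :
    nx T u j = some (v, p) := by
  have hpd : p < dg T v := (nx_isSome hT v p hv).1 (by rw [h]; rfl)
  have key := dg_key hT hpd
  have hp3 : p < 3 := key.2.2.2.2
  by_cases hvA : v < 3*T
  · interval_cases p
    · by_cases hve : v = 3*T-1
      · subst hve
        rw [nxA0e (by omega)] at h
        obtain ⟨rfl, rfl⟩ : 5*T = u ∧ 0 = j := by simpa using h
        rw [nxB0e (by omega)]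
      · rw [nxA0 (by omega)] at h
        obtain ⟨rfl, rfl⟩ : v+1 = u ∧ 1 = j := by simpa using h
        rw [nxA1 (by omega) (by omega)]
        try (simp only [Option.some.injEq, Prod.mk.injEq, and_true, true_and]; first | omega | (constructor <;> omega))
    · have hv0 : v ≠ 0 := by intro hc; have := key.1 hc; omega
      rw [nxA1 (by omega) hvA] at h
      obtain ⟨rfl, rfl⟩ : v-1 = u ∧ 0 = j := by simpa using h
      rw [nxA0 (by omega)]
      try (simp only [Option.some.injEq, Prod.mk.injEq, and_true, true_and]; first | omega | (constructor <;> omega))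
    · have hrange : T-2 ≤ v ∧ v ≤ 3*T-2 := by
        constructor
        · by_contra hc; have := key.2.1 (by omega); omega
        · by_contra hc
          have hv1 : v = 3*T-1 := by omega
          have := key.2.2.1 hv1; omega
      by_cases hve : v = T-2
      · subst hve
        rw [nxA2e hT] at h
        obtain ⟨rfl, rfl⟩ : 3*T = u ∧ 1 = j := by simpa using h
        rw [nxB1e (by omega)]
        try (simp only [Option.some.injEq, Prod.mk.injEq, and_true, true_and]; first | omega | (constructor <;> omega))
      · rw [nxA2 hT (by omega) hrange.2] at h
        obtain ⟨rfl, rfl⟩ : 3*T + (v - (T-2)) = u ∧ 2 = j := by simpa using h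
        rw [nxB2 (by omega) (by omega)]
        try (simp only [Option.some.injEq, Prod.mk.injEq, and_true, true_and]; first | omega | (constructor <;> omega))
  · interval_cases p
    · by_cases hve : v = 5*T
      · subst hve
        rw [nxB0e (by omega)] at h
        obtain ⟨rfl, rfl⟩ : 3*T-1 = u ∧ 0 = j := by simpa using h
        rw [nxA0e (by omega)]
        try (simp only [Option.some.injEq, Prod.mk.injEq, and_true, true_and]; first | omega | (constructor <;> omega))
      · rw [nxB0 (by omega) (by omega)] at h
        obtain ⟨rfl, rfl⟩ : v+1 = u ∧ 1 = j := by simpa using h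
        rw [nxB1 (by omega)]
        try (simp only [Option.some.injEq, Prod.mk.injEq, and_true, true_and]; first | omega | (constructor <;> omega))
    · by_cases hve : v = 3*T
      · subst hve
        rw [nxB1e (by omega)] at h
        obtain ⟨rfl, rfl⟩ : T-2 = u ∧ 2 = j := by simpa using h
        rw [nxA2e hT]
        try (simp only [Option.some.injEq, Prod.mk.injEq, and_true, true_and]; first | omega | (constructor <;> omega))
      · rw [nxB1 (by omega)] at h
        obtain ⟨rfl, rfl⟩ : v-1 = u ∧ 0 = j := by simpa using h
        rw [nxB0 (by omega) (by omega)]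
        try (simp only [Option.some.injEq, Prod.mk.injEq, and_true, true_and]; first | omega | (constructor <;> omega))
    · have hc : 3*T+1 ≤ v := by
        by_contra hc
        have hv1 : v = 3*T := by omega
        have := key.2.2.2.1 hv1; omega
      rw [nxB2 (by omega) hc] at h
      obtain ⟨rfl, rfl⟩ : v - 3*T + (T-2) = u ∧ 2 = j := by simpa using h
      rw [nxA2 hT (by omega) (by omega)]
      try (simp only [Option.some.injEq, Prod.mk.injEq, and_true, true_and]; first | omega | (constructor <;> omega))

def nxF (T : ℕ) (hT : 3 ≤ T) (v : Fin (5*T+1)) (p : ℕ) : Option (Fin (5*T+1) × ℕ) :=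
  (nx T v.val p).map
    (fun q => ((⟨min q.1 (5*T), Nat.lt_succ_of_le (min_le_right _ _)⟩ : Fin (5*T+1)), q.2))

lemma nxF_some_iff {T : ℕ} {hT : 3 ≤ T} {v : Fin (5*T+1)} {p : ℕ} {u : Fin (5*T+1)} {j : ℕ} :
    nxF T hT v p = some (u, j) ↔ nx T v.val p = some (u.val, j) := by
  unfold nxF
  rw [Option.map_eq_some_iff]
  constructor
  · rintro ⟨q, hq, he⟩
    have hb : q.1 < 5*T+1 := nx_lt hT (Nat.lt_succ_iff.mp v.isLt) hq
    obtain ⟨h1, h2⟩ := Prod.mk.injEq .. |>.mp he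
    have hm : min q.1 (5*T) = q.1 := by omega
    rw [← h1, ← h2]
    show nx T v.val p = some (min q.1 (5*T), q.2)
    rw [hm]
    exact hq
  · intro hq
    have hb : u.val < 5*T+1 := nx_lt hT (Nat.lt_succ_iff.mp v.isLt) hq
    refine ⟨(u.val, j), hq, Prod.ext (Fin.ext ?_) rfl⟩
    show min u.val (5*T) = u.val
    omega

lemma nxF_isSome {T : ℕ} {hT : 3 ≤ T} {v : Fin (5*T+1)} {p : ℕ} :
    (nxF T hT v p).isSome = (nx T v.val p).isSome := by
  unfold nxF
  rcases hx : nx T v.val p with _ | q <;> simp [hx]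

def G2raw (T : ℕ) (hT : 3 ≤ T) : PortGraph (Fin (5*T+1)) where
  deg v := dg T v.val
  next := nxF T hT
  next_isSome v p := by
    rw [nxF_isSome, nx_isSome hT v.val p (Nat.lt_succ_iff.mp v.isLt)]
  next_symm v p u j h := by
    rw [nxF_some_iff] at h ⊢
    exact nx_symm hT (Nat.lt_succ_iff.mp v.isLt) h
  next_ne v p u j h := by
    rw [nxF_some_iff] at h
    have := nx_ne hT (Nat.lt_succ_iff.mp v.isLt) h
    exact fun he => this (by rw [he])
  next_inj v p p' u j j' h1 h2 := by
    rw [nxF_some_iff] at h1 h2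
    exact nx_inj hT (Nat.lt_succ_iff.mp v.isLt) h1 h2
  connected u v := by
    have hT1 : (0 : ℕ) < 5*T+1 := by omega
    have down : ∀ m : ℕ, ∀ w : Fin (5*T+1), w.val ≤ m →
        Relation.ReflTransGen (fun a b => ∃ i j, nxF T hT a i = some (b, j)) w ⟨0, hT1⟩ := by
      intro m
      induction m with
      | zero =>
        intro w hw
        have : w = ⟨0, hT1⟩ := Fin.ext (by show w.val = 0; omega)
        rw [this]
      | succ m ih =>
        intro w hw
        by_cases h0 : w.val = 0
        · have : w = ⟨0, hT1⟩ := Fin.ext (by show w.val = 0; omega)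
          rw [this]
        · have hlt := Nat.lt_succ_iff.mp w.isLt
          by_cases hA : w.val < 3*T
          · refine Relation.ReflTransGen.head ⟨1, 0, ?_⟩
              (ih ⟨w.val - 1, by omega⟩ (by show w.val - 1 ≤ m; omega))
            rw [nxF_some_iff]
            exact nxA1 (by omega) hA
          · by_cases hB : w.val = 3*T
            · refine Relation.ReflTransGen.head ⟨1, 2, ?_⟩
                (ih ⟨T-2, by omega⟩ (by show T-2 ≤ m; omega))
              rw [nxF_some_iff, hB]
              exact nxB1e (by omega)
            · refine Relation.ReflTransGen.head ⟨1, 0, ?_⟩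
                (ih ⟨w.val - 1, by omega⟩ (by show w.val - 1 ≤ m; omega))
              rw [nxF_some_iff]
              exact nxB1 (by omega)
    have hsym : Symmetric (fun a b : Fin (5*T+1) => ∃ i j, nxF T hT a i = some (b, j)) := by
      rintro a b ⟨i, j, hab⟩
      refine ⟨j, i, ?_⟩
      rw [nxF_some_iff] at hab ⊢
      exact nx_symm hT (Nat.lt_succ_iff.mp a.isLt) hab
    exact (down _ u le_rfl).trans
      (haveI : Std.Symm (fun a b : Fin (5*T+1) => ∃ i j, nxF T hT a i = some (b, j)) :=
        ⟨fun a b h => hsym h⟩; Std.Symm.symm _ _ (down _ v le_rfl))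

lemma dg_eq_one {T : ℕ} (hT : 3 ≤ T) (v : ℕ) : dg T v = 1 ↔ v = 0 := by
  unfold dg; split_ifs <;> omega

lemma dgA {T : ℕ} (hT : 3 ≤ T) {i : ℕ} (h1 : T-2 ≤ i) (h2 : i ≤ 3*T-2) : dg T i = 3 := by
  unfold dg; split_ifs <;> omega

lemma dgB {T : ℕ} (hT : 3 ≤ T) {j : ℕ} (h1 : 1 ≤ j) (h2 : j ≤ 2*T) : dg T (3*T+j) = 3 := by
  unfold dg; split_ifs <;> omega

end Ladder

section Main

lemma ladder_view (T h' : ℕ) (hT : 3 ≤ T) (hh : 2 * h' = 5*T+1) (hh2 : 2 ≤ h') :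
    ∀ t : ℕ,
      (∀ i : ℕ, (h1 : T-2+t ≤ i) → (h2 : i ≤ 3*T-2-t) →
        PortGraph.viewEq2 (G2raw T hT) (Graw (5*T+1) h' hh hh2) t
          ⟨i, by omega⟩ ((((i : ℤ) - (2*(T:ℤ)-2)) : ℤ) : ZMod (5*T+1))) ∧
      (∀ j : ℕ, (h1 : t+1 ≤ j) → (h2 : j ≤ 2*T-1-t) →
        PortGraph.viewEq2 (G2raw T hT) (Graw (5*T+1) h' hh hh2) t
          ⟨3*T+j, by omega⟩ ((((j : ℤ) - (T:ℤ) + (h':ℤ)) : ℤ) : ZMod (5*T+1))) := by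
  intro t
  induction t with
  | zero =>
    constructor
    · intro i h1 h2
      show dg T i = 3
      exact dgA hT (by omega) (by omega)
    · intro j h1 h2
      show dg T (3*T+j) = 3
      exact dgB hT (by omega) (by omega)
  | succ t ih =>
    obtain ⟨ihA, ihB⟩ := ih
    constructor
    · intro i h1 h2
      refine ⟨?_, ?_⟩
      · show dg T i = 3
        exact dgA hT (by omega) (by omega)
      intro p pj pj' u' v' hu hv
      replace hu : nx T i p = some (u'.val, pj) := (nxF_some_iff (hT := hT)).mp hu
      have hp : p < dg T i := (nx_isSome hT i p (by omega)).1 (by rw [hu]; rfl)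
      rw [dgA hT (by omega) (by omega)] at hp
      interval_cases p
      · rw [nxA0 (by omega)] at hu
        obtain ⟨he1, he2⟩ := Prod.mk.injEq .. |>.mp (Option.some.inj hu)
        rw [Graw_next0] at hv
        obtain ⟨hf1, hf2⟩ := Prod.mk.injEq .. |>.mp (Option.some.inj hv)
        refine ⟨by omega, ?_⟩
        have hrec := ihA (i+1) (by omega) (by omega)
        have hu'eq : u' = (⟨i+1, by omega⟩ : Fin (5*T+1)) :=
          Fin.ext (by omega : u'.val = i+1)
        have hv'eq : v' = ((((i+1 : ℕ) : ℤ) - (2*(T:ℤ)-2) : ℤ) : ZMod (5*T+1)) := by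
          rw [← hf1]; push_cast; ring
        rw [hu'eq, hv'eq]
        exact hrec
      · rw [nxA1 (by omega) (by omega)] at hu
        obtain ⟨he1, he2⟩ := Prod.mk.injEq .. |>.mp (Option.some.inj hu)
        rw [Graw_next1] at hv
        obtain ⟨hf1, hf2⟩ := Prod.mk.injEq .. |>.mp (Option.some.inj hv)
        refine ⟨by omega, ?_⟩
        have hrec := ihA (i-1) (by omega) (by omega)
        have hu'eq : u' = (⟨i-1, by omega⟩ : Fin (5*T+1)) :=
          Fin.ext (by omega : u'.val = i-1)
        have hv'eq : v' = ((((i-1 : ℕ) : ℤ) - (2*(T:ℤ)-2) : ℤ) : ZMod (5*T+1)) := by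
          rw [← hf1, show ((i-1 : ℕ) : ℤ) = (i:ℤ) - 1 from by omega]; push_cast; ring
        rw [hu'eq, hv'eq]
        exact hrec
      · rw [nxA2 hT (by omega) (by omega)] at hu
        obtain ⟨he1, he2⟩ := Prod.mk.injEq .. |>.mp (Option.some.inj hu)
        rw [Graw_next2] at hv
        obtain ⟨hf1, hf2⟩ := Prod.mk.injEq .. |>.mp (Option.some.inj hv)
        refine ⟨by omega, ?_⟩
        have hrec := ihB (i-(T-2)) (by omega) (by omega)
        have hu'eq : u' = (⟨3*T+(i-(T-2)), by omega⟩ : Fin (5*T+1)) :=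
          Fin.ext (by omega : u'.val = 3*T+(i-(T-2)))
        have hv'eq : v' = ((((i-(T-2) : ℕ) : ℤ) - (T:ℤ) + (h':ℤ) : ℤ) : ZMod (5*T+1)) := by
          rw [← hf1, show ((i-(T-2) : ℕ) : ℤ) = (i:ℤ) - (T:ℤ) + 2 from by omega]
          push_cast; ring
        rw [hu'eq, hv'eq]
        exact hrec
    · intro j h1 h2
      refine ⟨?_, ?_⟩
      · show dg T (3*T+j) = 3
        exact dgB hT (by omega) (by omega)
      intro p pj pj' u' v' hu hv
      replace hu : nx T (3*T+j) p = some (u'.val, pj) := (nxF_some_iff (hT := hT)).mp hu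
      have hp : p < dg T (3*T+j) := (nx_isSome hT (3*T+j) p (by omega)).1 (by rw [hu]; rfl)
      rw [dgB hT (by omega) (by omega)] at hp
      interval_cases p
      · rw [nxB0 (by omega) (by omega)] at hu
        obtain ⟨he1, he2⟩ := Prod.mk.injEq .. |>.mp (Option.some.inj hu)
        rw [Graw_next0] at hv
        obtain ⟨hf1, hf2⟩ := Prod.mk.injEq .. |>.mp (Option.some.inj hv)
        refine ⟨by omega, ?_⟩
        have hrec := ihB (j+1) (by omega) (by omega)
        have hu'eq : u' = (⟨3*T+(j+1), by omega⟩ : Fin (5*T+1)) :=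
          Fin.ext (by omega : u'.val = 3*T+(j+1))
        have hv'eq : v' = ((((j+1 : ℕ) : ℤ) - (T:ℤ) + (h':ℤ) : ℤ) : ZMod (5*T+1)) := by
          rw [← hf1]; push_cast; ring
        rw [hu'eq, hv'eq]
        exact hrec
      · rw [nxB1 (by omega)] at hu
        obtain ⟨he1, he2⟩ := Prod.mk.injEq .. |>.mp (Option.some.inj hu)
        rw [Graw_next1] at hv
        obtain ⟨hf1, hf2⟩ := Prod.mk.injEq .. |>.mp (Option.some.inj hv)
        refine ⟨by omega, ?_⟩
        have hrec := ihB (j-1) (by omega) (by omega)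
        have hu'eq : u' = (⟨3*T+(j-1), by omega⟩ : Fin (5*T+1)) :=
          Fin.ext (by omega : u'.val = 3*T+(j-1))
        have hv'eq : v' = ((((j-1 : ℕ) : ℤ) - (T:ℤ) + (h':ℤ) : ℤ) : ZMod (5*T+1)) := by
          rw [← hf1, show ((j-1 : ℕ) : ℤ) = (j:ℤ) - 1 from by omega]; push_cast; ring
        rw [hu'eq, hv'eq]
        exact hrec
      · rw [nxB2 (by omega) (by omega)] at hu
        obtain ⟨he1, he2⟩ := Prod.mk.injEq .. |>.mp (Option.some.inj hu)
        rw [Graw_next2] at hv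
        obtain ⟨hf1, hf2⟩ := Prod.mk.injEq .. |>.mp (Option.some.inj hv)
        refine ⟨by omega, ?_⟩
        have hrec := ihA (j+(T-2)) (by omega) (by omega)
        have hu'eq : u' = (⟨j+(T-2), by omega⟩ : Fin (5*T+1)) :=
          Fin.ext (by omega : u'.val = j+(T-2))
        have hz : ((h' : ℕ) : ZMod (5*T+1)) + ((h' : ℕ) : ZMod (5*T+1)) = 0 := by
          rw [← Nat.cast_add, show h'+h' = 5*T+1 from by omega, ZMod.natCast_self]
        have hv'eq : v' = ((((j+(T-2) : ℕ) : ℤ) - (2*(T:ℤ)-2) : ℤ) : ZMod (5*T+1)) := by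
          rw [← hf1, show ((j+(T-2) : ℕ) : ℤ) = (j:ℤ) - (T:ℤ) + (2*(T:ℤ)-2) from by omega]
          push_cast
          linear_combination hz
        rw [hu'eq, hv'eq]
        exact hrec

end Main


/-- (Core of Theorem 4.3, part 2) For every `k ≥ 2` there exist two port-numbered graphs
`G` and `G'`, both on `n = 5 · 2^k − 4` vertices, such that: all vertices of `G` are
3-regular and have identical views (so `G` has two distinct vertices with equal views);
`G'` has exactly one vertex of degree 1 (hence a vertex with a unique view, and all views
of `G'` are pairwise distinct); and `G'` contains a vertex `w` whose view truncated at
depth `2^k − 1` equals the common view, truncated at depth `2^k − 1`, of the vertices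
of `G`. -/
theorem exists_strong_LE_lower_bound_pair (k : ℕ) (hk : 2 ≤ k) :
    ∃ (G G' : PortGraph (Fin (5 * 2 ^ k - 4))),
      (∀ v : Fin (5 * 2 ^ k - 4), G.deg v = 3) ∧
      (∀ u v : Fin (5 * 2 ^ k - 4), PortGraph.ViewEq2 G G u v) ∧
      (∃ u v : Fin (5 * 2 ^ k - 4), u ≠ v ∧ PortGraph.ViewEq2 G G u v) ∧
      (∃! z : Fin (5 * 2 ^ k - 4), G'.deg z = 1) ∧
      (∀ u v : Fin (5 * 2 ^ k - 4), PortGraph.ViewEq2 G' G' u v → u = v) ∧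
      (∃ w : Fin (5 * 2 ^ k - 4), ∀ v : Fin (5 * 2 ^ k - 4),
        PortGraph.viewEq2 G' G (2 ^ k - 1) w v) := by
  have hN4 : 4 ≤ 2^k := by
    calc 4 = 2^2 := by norm_num
    _ ≤ 2^k := Nat.pow_le_pow_right (by norm_num) hk
  have h2k : 2^k = 2*2^(k-1) := by
    rw [← pow_succ']
    congr 1
    omega
  have hm2 : 2 ≤ 2^(k-1) := by omega
  set T := 2^k - 1 with hTdef
  have hT3 : 3 ≤ T := by omega
  set h' := 5*2^(k-1)-2 with hh'def
  have hh : 2 * h' = 5*T+1 := by omega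
  have hh2 : 2 ≤ h' := by omega
  have hn : 5*T+1 = 5 * 2^k - 4 := by omega
  haveI : NeZero (5*T+1) := ⟨by omega⟩
  haveI : Fact (1 < 5*T+1) := ⟨by omega⟩
  let eF : Fin (5*T+1) ≃ Fin (5 * 2^k - 4) := finCongr hn
  let eZ : ZMod (5*T+1) ≃ Fin (5 * 2^k - 4) :=
    Fintype.equivFinOfCardEq (by rw [ZMod.card]; omega)
  refine ⟨(Graw (5*T+1) h' hh hh2).map eZ, (G2raw T hT3).map eF, ?_, ?_, ?_, ?_, ?_, ?_⟩
  case _ => intro v; rfl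
  -- all views of G equal
  case _ =>
    have hall : ∀ u v : Fin (5 * 2^k - 4), ∀ t,
        PortGraph.viewEq2 ((Graw (5*T+1) h' hh hh2).map eZ)
          ((Graw (5*T+1) h' hh hh2).map eZ) t u v := by
      intro u v t
      have h0 := Graw_hom (5*T+1) h' hh hh2 t (eZ.symm u) (eZ.symm v)
      have s1 := (PortGraph.viewEq2_map_right eZ _ _ t (eZ.symm u) (eZ.symm v)).mpr h0
      have s2 := (PortGraph.viewEq2_map_left eZ _ _ t (eZ.symm u) (eZ (eZ.symm v))).mpr s1
      simpa using s2
    exact fun u v t => hall u v t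
  case _ =>
    refine ⟨eZ 0, eZ 1, fun hc => ?_, ?_⟩
    · exact (zero_ne_one (α := ZMod (5*T+1))) (eZ.injective hc)
    · intro t
      have h0 := Graw_hom (5*T+1) h' hh hh2 t (eZ.symm (eZ 0)) (eZ.symm (eZ 1))
      have s1 := (PortGraph.viewEq2_map_right eZ _ _ t _ _).mpr h0
      have s2 := (PortGraph.viewEq2_map_left eZ _ _ t _ (eZ (eZ.symm (eZ 1)))).mpr s1
      simpa using s2
  case _ =>
    refine ⟨eF ⟨0, by omega⟩, ?_, ?_⟩
    · show dg T (eF.symm (eF ⟨0, by omega⟩)).val = 1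
      rw [Equiv.symm_apply_apply]
      rfl
    · intro y hy
      have hy' : dg T (eF.symm y).val = 1 := hy
      rw [dg_eq_one hT3] at hy'
      have : eF.symm y = ⟨0, by omega⟩ := Fin.ext hy'
      rw [← Equiv.apply_symm_apply eF y, this]
  case _ =>
    intro u v H
    refine PortGraph.eq_of_viewEq2_self (z := eF ⟨0, by omega⟩) ?_ ?_ u v H
    · show dg T (eF.symm (eF ⟨0, by omega⟩)).val = 1
      rw [Equiv.symm_apply_apply]
      rfl
    · intro y hy
      have hy' : dg T (eF.symm y).val = 1 := hy
      rw [dg_eq_one hT3] at hy'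
      have : eF.symm y = ⟨0, by omega⟩ := Fin.ext hy'
      rw [← Equiv.apply_symm_apply eF y, this]
  case _ =>
    refine ⟨eF ⟨2*T-2, by omega⟩, ?_⟩
    intro v
    have base := (ladder_view T h' hT3 hh hh2 T).1 (2*T-2) (by omega) (by omega)
    have hcomp := PortGraph.viewEq2_trans T _ _ _ base
      (Graw_hom (5*T+1) h' hh hh2 T _ (eZ.symm v))
    have s1 := (PortGraph.viewEq2_map_right eZ _ _ T _ (eZ.symm v)).mpr hcomp
    have s2 := (PortGraph.viewEq2_map_left eF _ _ T _ (eZ (eZ.symm v))).mpr s1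
    simpa using s2
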